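/- Suppose f : ℝ² → 𝔽² preserves every distance d > 0 with d² rational. If A, B, C, D ∈ ℝ² and the vectors B - A and D - C are linearly dependent over ℝ, then f(B) - f(A) and f(D) - f(C) are linearly dependent over 𝔽. -/

import Mathlib

set_option linter.unusedSectionVars false
set_option maxHeartbeats 1000000

namespace Stmt12

variable {F : Type*} [Field F]

/-- squared norm form on `F × F` -/
def q2 (v : F × F) : F := v.1^2 + v.2^2
/-- bilinear form on `F × F` -/
def bil (v w : F × F) : F := v.1*w.1 + v.2*w.2
/-- cross (determinant) form on `F × F` -/
def cr (v w : F × F) : F := v.1*w.2 - v.2*w.1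
/-- squared norm on `ℝ × ℝ` -/
def nE (z : ℝ × ℝ) : ℝ := z.1^2 + z.2^2
/-- rotation by 90° on `ℝ × ℝ` -/
def rotE (z : ℝ × ℝ) : ℝ × ℝ := (-z.2, z.1)
/-- fiber map -/
def Vf (U : ℝ × ℝ → F × F) (w : ℝ × ℝ) (t : ℝ) : F × F := U (t • w)
/-- the difference map -/
noncomputable def Umap (f : ℝ × ℝ → F × F) (z : ℝ × ℝ) : F × F := f z - f 0

/- ### pure algebra on `F × F` -/

lemma smul_coords (c : F) (v : F × F) : (c • v) = (c * v.1, c * v.2) := by ext <;> simp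

lemma q2_add (v w : F × F) : q2 (v + w) = q2 v + q2 w + 2 * bil v w := by
  simp only [q2, bil, Prod.fst_add, Prod.snd_add]; ring

lemma q2_sub (v w : F × F) : q2 (v - w) = q2 v + q2 w - 2 * bil v w := by
  simp only [q2, bil, Prod.fst_sub, Prod.snd_sub]; ring

lemma bil_add_sub (v w : F × F) : bil (v + w) (v - w) = q2 v - q2 w := by
  simp only [q2, bil, Prod.fst_add, Prod.snd_add, Prod.fst_sub, Prod.snd_sub]; ring

lemma bil_sub_left (u v w : F × F) : bil (u - v) w = bil u w - bil v w := by
  simp only [bil, Prod.fst_sub, Prod.snd_sub]; ring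

lemma bil_add_right (u v w : F × F) : bil u (v + w) = bil u v + bil u w := by
  simp only [bil, Prod.fst_add, Prod.snd_add]; ring

lemma bil_sub_right (u v w : F × F) : bil u (v - w) = bil u v - bil u w := by
  simp only [bil, Prod.fst_sub, Prod.snd_sub]; ring

lemma bil_smul_right (u v : F × F) (c : F) : bil u (c • v) = c * bil u v := by
  simp only [bil, Prod.smul_fst, Prod.smul_snd, smul_eq_mul]; ring

lemma bil_self (v : F × F) : bil v v = q2 v := by simp only [bil, q2]; ring

lemma bil_comm (v w : F × F) : bil v w = bil w v := by simp only [bil]; ring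

lemma q2_smul (c : F) (v : F × F) : q2 (c • v) = c^2 * q2 v := by
  simp only [q2, Prod.smul_fst, Prod.smul_snd, smul_eq_mul]; ring

lemma cr_self (v : F × F) : cr v v = 0 := by simp only [cr]; ring

lemma cr_smul_right (u v : F × F) (c : F) : cr u (c • v) = c * cr u v := by
  simp only [cr, Prod.smul_fst, Prod.smul_snd, smul_eq_mul]; ring

lemma cr_smul_left (u v : F × F) (c : F) : cr (c • u) v = c * cr u v := by
  simp only [cr, Prod.smul_fst, Prod.smul_snd, smul_eq_mul]; ring

lemma lagrange (v w : F × F) : (cr v w)^2 = q2 v * q2 w - (bil v w)^2 := by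
  simp only [cr, q2, bil]; ring

lemma q2_ne_zero_of (v : F × F) (h : q2 v ≠ 0) : v ≠ 0 := by
  intro hv; rw [hv] at h; exact h (by simp [q2])

/-- parallelism from cross vanishing -/
lemma par_of_cr (v w : F × F) (hv : v ≠ 0) (h : cr v w = 0) : ∃ c : F, w = c • v := by
  have h' : v.1 * w.2 - v.2 * w.1 = 0 := h
  by_cases h1 : v.1 = 0
  · have h2 : v.2 ≠ 0 := fun h2 => hv (Prod.ext h1 h2)
    refine ⟨w.2 / v.2, ?_⟩
    rw [smul_coords]
    have hw1 : w.1 = w.2 / v.2 * v.1 := by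
      rw [h1, mul_zero]
      have : v.2 * w.1 = 0 := by linear_combination -h' + w.2 * h1
      rcases mul_eq_zero.mp this with h' | h'
      · exact absurd h' h2
      · exact h'
    have hw2 : w.2 = w.2 / v.2 * v.2 := by field_simp
    exact Prod.ext hw1 hw2
  · refine ⟨w.1 / v.1, ?_⟩
    rw [smul_coords]
    have hw1 : w.1 = w.1 / v.1 * v.1 := by field_simp
    have hw2 : w.2 = w.1 / v.1 * v.2 := by
      rw [div_mul_eq_mul_div, eq_div_iff h1]
      linear_combination h'
    exact Prod.ext hw1 hw2

/-- isotropic perp : if `v` is isotropic nonzero and `bil v x = 0` then `x ∈ F v` -/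
lemma par_of_iso (v x : F × F) (hq : q2 v = 0) (hv : v ≠ 0) (h : bil v x = 0) :
    ∃ c : F, x = c • v := by
  have hq' : v.1^2 + v.2^2 = 0 := hq
  have hb : v.1 * x.1 + v.2 * x.2 = 0 := h
  have h1 : v.1 ≠ 0 := by
    intro h1
    have h2 : v.2 = 0 := by
      have : v.2 ^ 2 = 0 := by linear_combination hq' - v.1 * h1
      exact pow_eq_zero_iff two_ne_zero |>.mp this
    exact hv (Prod.ext h1 h2)
  have h2 : v.2 ≠ 0 := by
    intro h2
    have h1' : v.1 = 0 := by
      have : v.1 ^ 2 = 0 := by linear_combination hq' - v.2 * h2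
      exact pow_eq_zero_iff two_ne_zero |>.mp this
    exact h1 h1'
  refine ⟨x.2 / v.2, ?_⟩
  rw [smul_coords]
  refine Prod.ext ?_ (by field_simp)
  rw [div_mul_eq_mul_div, eq_div_iff h2]
  have hv1 : v.1 * (x.1 * v.2 - x.2 * v.1) = 0 := by
    linear_combination v.2 * hb - x.2 * hq'
  rcases mul_eq_zero.mp hv1 with h' | h'
  · exact absurd h' h1
  · linear_combination h'

/-- the mediator principle -/
lemma cr_eq_zero_mediator (a b c : F × F) (h1 : bil a c = 0) (h2 : bil b c = 0)
    (hc : q2 c ≠ 0) : cr a b = 0 := by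
  have key : cr a b * q2 c = cr a c * bil b c - cr b c * bil a c := by
    simp only [cr, q2, bil]; ring
  rw [h1, h2, mul_zero, mul_zero, sub_zero] at key
  rcases mul_eq_zero.mp key with h | h
  · exact h
  · exact absurd h hc

/-- a vector perpendicular to an anisotropic vector which is isotropic must vanish -/
lemma iso_perp_eq_zero (h d : F × F) (hh : q2 h ≠ 0) (hb : bil h d = 0) (hd : q2 d = 0) :
    d = 0 := by
  have hcr : (cr h d)^2 = 0 := by rw [lagrange, hb, hd]; ring
  have hcr0 : cr h d = 0 := pow_eq_zero_iff two_ne_zero |>.mp hcr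
  obtain ⟨c, hc⟩ := par_of_cr h d (q2_ne_zero_of h hh) hcr0
  have hbil : c * q2 h = 0 := by
    have hb2 : bil h (c • h) = 0 := hc ▸ hb
    calc c * q2 h = bil h (c • h) := by
          simp only [bil, q2, smul_coords]; ring
      _ = 0 := hb2
  rcases mul_eq_zero.mp hbil with h' | h'
  · rw [hc, h', zero_smul]
  · exact absurd h' hh

/- ### geometry on `ℝ × ℝ` -/

lemma nE_nonneg (z : ℝ × ℝ) : 0 ≤ nE z := by
  have := sq_nonneg z.1; have := sq_nonneg z.2; simp only [nE]; linarith

lemma nE_pos (z : ℝ × ℝ) (h : z ≠ 0) : 0 < nE z := by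
  rcases lt_or_eq_of_le (nE_nonneg z) with h' | h'
  · exact h'
  · exfalso; apply h
    have hE : z.1^2 + z.2^2 = 0 := h'.symm
    have h1 : z.1 = 0 := by nlinarith [sq_nonneg z.1, sq_nonneg z.2]
    have h2 : z.2 = 0 := by nlinarith [sq_nonneg z.1, sq_nonneg z.2]
    exact Prod.ext h1 h2

lemma smul_coordsE (c : ℝ) (v : ℝ × ℝ) : (c • v) = (c * v.1, c * v.2) := by ext <;> simp

lemma nE_combo (a b : ℝ) (z : ℝ × ℝ) :
    nE (a • z + b • rotE z) = (a^2 + b^2) * nE z := by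
  simp only [nE, rotE, smul_coordsE, Prod.fst_add, Prod.snd_add]; ring

lemma nE_smul (c : ℝ) (z : ℝ × ℝ) : nE (c • z) = c^2 * nE z := by
  simp only [nE, smul_coordsE]; ring

/- ### the foundation : position independence of increments -/

section Foundation

variable [CharZero F]

/-- reflection rigidity along a rational segment -/
lemma thales_refl (f : ℝ × ℝ → F × F)
    (hq : ∀ x y : ℝ × ℝ, ∀ ρ : ℚ, (ρ : ℝ) = nE (x - y) → q2 (f x - f y) = (ρ : F))
    (P z : ℝ × ℝ) (ρ : ℚ) (hρ : 0 < ρ) (hz : (ρ:ℝ) = nE z) :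
    f (P - z) - f P = -(f (P + z) - f P) := by
  have hqa : q2 (f (P + z) - f P) = (ρ : F) := by
    apply hq; rw [show P + z - P = z by abel]; exact hz
  have hqb : q2 (f P - f (P - z)) = (ρ : F) := by
    apply hq; rw [show P - (P - z) = z by abel]; exact hz
  have hqab : q2 (f (P + z) - f (P - z)) = ((4 * ρ : ℚ) : F) := by
    apply hq
    rw [show P + z - (P - z) = z + z by abel]
    push_cast
    simp only [nE, Prod.fst_add, Prod.snd_add] at *
    nlinarith [hz]
  have hsum : f (P + z) - f (P - z) = (f (P + z) - f P) + (f P - f (P - z)) := by abel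
  rw [hsum] at hqab
  rw [q2_add, hqa, hqb] at hqab
  push_cast at hqab
  have hbil : bil (f (P + z) - f P) (f P - f (P - z)) = (ρ : F) := by
    linear_combination hqab / 2
  have hδq : q2 ((f (P + z) - f P) - (f P - f (P - z))) = 0 := by
    rw [q2_sub, hqa, hqb, hbil]; ring
  have hδb : bil (f (P + z) - f P) ((f (P + z) - f P) - (f P - f (P - z))) = 0 := by
    rw [bil_sub_right, bil_self, hqa, hbil]; ring
  have hqa0 : q2 (f (P + z) - f P) ≠ 0 := by
    rw [hqa]; exact Rat.cast_ne_zero.mpr (ne_of_gt hρ)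
  have hδ := iso_perp_eq_zero _ _ hqa0 hδb hδq
  have hab : f (P + z) - f P = f P - f (P - z) := sub_eq_zero.mp hδ
  rw [hab]; abel

/-- the comb / tooth lemma -/
lemma step_edge (f : ℝ × ℝ → F × F)
    (hq : ∀ x y : ℝ × ℝ, ∀ ρ : ℚ, (ρ : ℝ) = nE (x - y) → q2 (f x - f y) = (ρ : F))
    (P Q z : ℝ × ℝ) (ρ ρ' : ℚ) (hρ : 0 < ρ) (hz : (ρ:ℝ) = nE z)
    (hρ' : 0 < ρ') (hPQ : (ρ':ℝ) = nE (Q - P)) :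
    f (Q + z) - f Q = f (P + z) - f P := by
  have hrefP := thales_refl f hq P z ρ hρ hz
  have hrefQ := thales_refl f hq Q z ρ hρ hz
  have h0 : q2 (f Q - f P) = (ρ' : F) := hq Q P ρ' hPQ
  have h1 : q2 (f (Q + z) - f (P + z)) = (ρ' : F) := by
    apply hq; rw [show Q + z - (P + z) = Q - P by abel]; exact hPQ
  have hm1 : q2 (f (Q - z) - f (P - z)) = (ρ' : F) := by
    apply hq; rw [show Q - z - (P - z) = Q - P by abel]; exact hPQ
  have e1 : f (Q + z) - f (P + z)
      = (f Q - f P) + ((f (Q + z) - f Q) - (f (P + z) - f P)) := by abel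
  have em1 : f (Q - z) - f (P - z)
      = (f Q - f P) - ((f (Q + z) - f Q) - (f (P + z) - f P)) := by
    have hPm : f (P - z) = f P - (f (P + z) - f P) := by
      have := hrefP; rw [sub_eq_iff_eq_add] at this; rw [this]; abel
    have hQm : f (Q - z) = f Q - (f (Q + z) - f Q) := by
      have := hrefQ; rw [sub_eq_iff_eq_add] at this; rw [this]; abel
    rw [hPm, hQm]; abel
  rw [e1, q2_add, h0] at h1
  rw [em1, q2_sub, h0] at hm1
  have hδq : q2 ((f (Q + z) - f Q) - (f (P + z) - f P)) = 0 := by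
    linear_combination (h1 + hm1) / 2
  have hδb : bil (f Q - f P) ((f (Q + z) - f Q) - (f (P + z) - f P)) = 0 := by
    linear_combination (h1 - hm1) / 4
  have h00 : q2 (f Q - f P) ≠ 0 := by
    rw [h0]; exact Rat.cast_ne_zero.mpr (ne_of_gt hρ')
  have := iso_perp_eq_zero _ _ h00 hδb hδq
  exact sub_eq_zero.mp this

/-- the increment of `f` along a rational-square step is position independent -/
lemma step_global (f : ℝ × ℝ → F × F)
    (hq : ∀ x y : ℝ × ℝ, ∀ ρ : ℚ, (ρ : ℝ) = nE (x - y) → q2 (f x - f y) = (ρ : F))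
    (P Q z : ℝ × ℝ) (ρ : ℚ) (hρ : 0 < ρ) (hz : (ρ:ℝ) = nE z) :
    f (Q + z) - f Q = f (P + z) - f P := by
  by_cases hPQ : Q = P
  · rw [hPQ]
  · have hv : Q - P ≠ 0 := sub_ne_zero.mpr hPQ
    have hn : 0 < nE (Q - P) := nE_pos _ hv
    obtain ⟨κ, hκ⟩ := exists_rat_gt (nE (Q - P))
    have hκpos : 0 < κ := by
      have : (0:ℝ) < κ := lt_trans hn hκ
      exact_mod_cast this
    set v := Q - P with hvdef
    have hτrad : 0 ≤ (κ:ℝ) / nE v - 1/4 := by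
      rw [le_sub_iff_add_le, zero_add]
      rw [le_div_iff₀ hn]
      nlinarith [hκ, hn]
    set τ := Real.sqrt ((κ:ℝ) / nE v - 1/4) with hτ
    have hτsq : τ^2 = (κ:ℝ) / nE v - 1/4 := Real.sq_sqrt hτrad
    set Z := P + ((1:ℝ)/2) • v + τ • rotE v with hZ
    have hZP : (κ:ℝ) = nE (Z - P) := by
      have harr : Z - P = ((1:ℝ)/2) • v + τ • rotE v := by rw [hZ]; abel
      rw [harr, nE_combo]
      rw [hτsq]
      field_simp
      ring
    have hZQ : (κ:ℝ) = nE (Q - Z) := by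
      have hQ : Q = P + v := by rw [hvdef]; abel
      have hQZ : Q - Z = ((1:ℝ)/2) • v + (-τ) • rotE v := by
        rw [hZ, hQ, neg_smul]
        have h2 : ((1:ℝ)/2) • v + ((1:ℝ)/2) • v = v := by
          rw [← add_smul]; norm_num
        calc P + v - (P + (1/2:ℝ) • v + τ • rotE v)
            = (((1:ℝ)/2) • v + ((1:ℝ)/2) • v) - (1/2:ℝ) • v - τ • rotE v := by rw [h2]; abel
          _ = ((1:ℝ)/2) • v + -(τ • rotE v) := by abel
      rw [hQZ, nE_combo, neg_pow, hτsq]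
      field_simp
      ring
    calc f (Q + z) - f Q = f (Z + z) - f Z :=
          step_edge f hq Z Q z ρ κ hρ hz hκpos hZQ
      _ = f (P + z) - f P := step_edge f hq P Z z ρ κ hρ hz hκpos hZP

/-- full translation invariance -/
lemma U_transl (f : ℝ × ℝ → F × F)
    (hq : ∀ x y : ℝ × ℝ, ∀ ρ : ℚ, (ρ : ℝ) = nE (x - y) → q2 (f x - f y) = (ρ : F))
    (P z : ℝ × ℝ) : f (P + z) = f P + Umap f z := by
  by_cases hz : z = 0
  · simp [hz, Umap]
  · have hn : 0 < nE z := nE_pos _ hz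
    obtain ⟨T, hT⟩ := exists_rat_gt (Real.sqrt (nE z))
    have hsq : 0 < Real.sqrt (nE z) := Real.sqrt_pos.mpr hn
    have hTpos : (0:ℝ) < T := lt_trans hsq hT
    have hT2 : nE z < (T:ℝ)^2 := by
      nlinarith [Real.sq_sqrt (le_of_lt hn), hT, hsq]
    have hrad : 0 ≤ (T:ℝ)^2 / nE z - 1/4 := by
      rw [le_sub_iff_add_le, zero_add, le_div_iff₀ hn]
      nlinarith [hT2, hn]
    set s₀ := Real.sqrt ((T:ℝ)^2 / nE z - 1/4) with hs₀
    have hs₀sq : s₀^2 = (T:ℝ)^2 / nE z - 1/4 := Real.sq_sqrt hrad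
    set z₁ := ((1:ℝ)/2) • z + s₀ • rotE z with hz₁
    set z₂ := ((1:ℝ)/2) • z - s₀ • rotE z with hz₂
    have hz12 : z₁ + z₂ = z := by
      rw [hz₁, hz₂]
      have hhalf : ((1:ℝ)/2) • z + ((1:ℝ)/2) • z = z := by
        rw [← add_smul]; norm_num
      calc ((1:ℝ)/2) • z + s₀ • rotE z + (((1:ℝ)/2) • z - s₀ • rotE z)
          = ((1:ℝ)/2) • z + ((1:ℝ)/2) • z := by abel
        _ = z := hhalf
    have hTposQ : (0:ℚ) < T := by exact_mod_cast hTpos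
    have hT2pos : 0 < T^2 := by positivity
    have hn1 : ((T^2 : ℚ):ℝ) = nE z₁ := by
      rw [hz₁, nE_combo, hs₀sq]; push_cast; field_simp; ring
    have hn2 : ((T^2 : ℚ):ℝ) = nE z₂ := by
      have harr : z₂ = ((1:ℝ)/2) • z + (-s₀) • rotE z := by
        rw [hz₂, neg_smul]; abel
      rw [harr, nE_combo, neg_pow, hs₀sq]
      push_cast; field_simp; ring
    have key1 : f (P + z₁ + z₂) - f (P + z₁) = f (z₁ + z₂) - f z₁ :=
      step_global f hq z₁ (P + z₁) z₂ (T^2) hT2pos hn2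
    have key2 : f (P + z₁) - f P = f z₁ - f 0 := by
      have := step_global f hq 0 P z₁ (T^2) hT2pos hn1
      simpa using this
    have hPz : P + z = P + z₁ + z₂ := by rw [← hz12]; abel
    have hzz : (z : ℝ × ℝ) = z₁ + z₂ := hz12.symm
    rw [Umap, hPz, hzz]
    rw [show f (P + z₁ + z₂) = f (P + z₁) + (f (z₁ + z₂) - f z₁) by rw [← key1]; abel]
    rw [show f (P + z₁) = f P + (f z₁ - f 0) by rw [← key2]; abel]
    abel

end Foundation

/- ### the fiber machinery -/

section Fiber
variable [CharZero F]
variable (U : ℝ × ℝ → F × F) (w : ℝ × ℝ)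

lemma U_zero (hUadd : ∀ y z : ℝ × ℝ, U (y + z) = U y + U z) : U 0 = 0 := by
  have := hUadd 0 0; simp at this; exact this

lemma U_sub (hUadd : ∀ y z : ℝ × ℝ, U (y + z) = U y + U z) (y z : ℝ × ℝ) :
    U (y - z) = U y - U z := by
  have h := hUadd (y - z) z
  rw [sub_add_cancel] at h
  rw [h]; abel

lemma U_rat_smul (hUadd : ∀ y z : ℝ × ℝ, U (y + z) = U y + U z) (c : ℚ) (z : ℝ × ℝ) :
    U ((c:ℝ) • z) = (c:F) • U z := by
  let U' : (ℝ × ℝ) →+ (F × F) := AddMonoidHom.mk' U (by intro a b; exact hUadd a b)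
  have := map_ratCast_smul U' ℝ F c z
  simpa [U'] using this

lemma V_add (hUadd : ∀ y z : ℝ × ℝ, U (y + z) = U y + U z) (a b : ℝ) :
    Vf U w (a + b) = Vf U w a + Vf U w b := by
  unfold Vf; rw [add_smul]; exact hUadd _ _

lemma V_sub (hUadd : ∀ y z : ℝ × ℝ, U (y + z) = U y + U z) (a b : ℝ) :
    Vf U w (a - b) = Vf U w a - Vf U w b := by
  unfold Vf; rw [sub_smul]; exact U_sub U hUadd _ _

lemma V_rat (hUadd : ∀ y z : ℝ × ℝ, U (y + z) = U y + U z) (c : ℚ) (t : ℝ) :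
    Vf U w ((c:ℝ) * t) = (c:F) • Vf U w t := by
  unfold Vf
  rw [mul_smul]
  exact U_rat_smul U hUadd c _

lemma V_natmul (hUadd : ∀ y z : ℝ × ℝ, U (y + z) = U y + U z) (n : ℕ) (t : ℝ) :
    Vf U w ((n:ℝ) * t) = (n:F) • Vf U w t := by
  have := V_rat U w hUadd (n:ℚ) t
  push_cast at this
  exact this

lemma V_q2 (hUq : ∀ (z : ℝ × ℝ) (ρ : ℚ), (ρ : ℝ) = nE z → q2 (U z) = (ρ : F))
    (hw : nE w = 1) (t : ℝ) (ρ : ℚ) (h : (ρ:ℝ) = t^2) : q2 (Vf U w t) = (ρ:F) := by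
  apply hUq
  rw [show nE (t • w) = t^2 * nE w by rw [smul_coordsE]; simp [nE]; ring, hw, mul_one]
  exact h

lemma web_data (hUadd : ∀ y z : ℝ × ℝ, U (y + z) = U y + U z)
    (hUq : ∀ (z : ℝ × ℝ) (ρ : ℚ), (ρ : ℝ) = nE z → q2 (U z) = (ρ : F))
    (hw : nE w = 1) {t : ℝ} (ht : t ≠ 0) (Q : ℚ) (hQ : ((t + 1/t)/2)^2 + 1 < (Q:ℝ)) :
    ∃ Y : ℝ × ℝ,
      q2 (U Y) = (Q:F) ∧
      q2 (U Y - Vf U w t) = ((Q - 1 : ℚ):F) ∧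
      q2 (U Y - Vf U w (1/t)) = ((Q - 1 : ℚ):F) := by
  set ξ := (t + 1/t)/2 with hξ
  have hrad : 0 ≤ (Q:ℝ) - ξ^2 := by nlinarith [hQ]
  set y := Real.sqrt ((Q:ℝ) - ξ^2) with hy
  have hysq : y^2 = (Q:ℝ) - ξ^2 := Real.sq_sqrt hrad
  refine ⟨ξ • w + y • rotE w, ?_, ?_, ?_⟩
  · apply hUq
    rw [nE_combo, hw, mul_one, hysq]; ring
  · rw [show U (ξ • w + y • rotE w) - Vf U w t = U ((ξ • w + y • rotE w) - t • w) by
      rw [U_sub U hUadd]; rfl]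
    apply hUq
    have harr : (ξ • w + y • rotE w) - t • w = (ξ - t) • w + y • rotE w := by module
    rw [harr, nE_combo, hw, mul_one, hysq]
    have h1 : (ξ - t)^2 = ξ^2 - 1 := by rw [hξ]; field_simp; ring
    rw [h1]; push_cast; ring
  · rw [show U (ξ • w + y • rotE w) - Vf U w (1/t) = U ((ξ • w + y • rotE w) - (1/t) • w) by
      rw [U_sub U hUadd]; rfl]
    apply hUq
    have harr : (ξ • w + y • rotE w) - (1/t) • w = (ξ - 1/t) • w + y • rotE w := by module
    rw [harr, nE_combo, hw, mul_one, hysq]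
    have h1 : (ξ - 1/t)^2 = ξ^2 - 1 := by rw [hξ]; field_simp; ring
    rw [h1]; push_cast; ring

/-- FR : `⟨V t, V (1/t)⟩ = 1` -/
lemma FR (hUadd : ∀ y z : ℝ × ℝ, U (y + z) = U y + U z)
    (hUq : ∀ (z : ℝ × ℝ) (ρ : ℚ), (ρ : ℝ) = nE z → q2 (U z) = (ρ : F))
    (hw : nE w = 1) {t : ℝ} (ht : t ≠ 0) : bil (Vf U w t) (Vf U w (1/t)) = 1 := by
  classical
  set ξ := (t + 1/t)/2 with hξ
  obtain ⟨Q, hQ⟩ := exists_rat_gt (ξ^2 + 1)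
  have hrad : 0 ≤ (Q:ℝ) - ξ^2 := by nlinarith [hQ]
  set y := Real.sqrt ((Q:ℝ) - ξ^2) with hy
  have hysq : y^2 = (Q:ℝ) - ξ^2 := Real.sq_sqrt hrad
  have hkey : ∀ s : ℝ, s^2 = (Q:ℝ) - ξ^2 →
      bil (Vf U w t) (Vf U w (1/t) + U ((2*s) • rotE w)) = 1 := by
    intro s hssq
    set Y := ξ • w + s • rotE w with hY
    have hnY : q2 (U Y) = (Q:F) := by
      apply hUq; rw [hY, nE_combo, hw, mul_one, hssq]; ring
    set z₂ := t • w - Y with hz₂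
    have hnz₂ : q2 (U z₂) = ((Q - 1 : ℚ):F) := by
      apply hUq
      have harr : z₂ = (t - ξ) • w + (-s) • rotE w := by rw [hz₂, hY]; module
      rw [harr, nE_combo, hw, mul_one, neg_pow, hssq]
      have h1 : (t - ξ)^2 = ξ^2 - 1 := by rw [hξ]; field_simp; ring
      rw [h1]; push_cast; ring
    have hsumU : Vf U w t = U Y + U z₂ := by
      have hYz : Y + z₂ = t • w := by rw [hz₂]; abel
      rw [Vf, ← hYz]; exact hUadd _ _
    have hdiffU : U Y - U z₂ = Vf U w (1/t) + U ((2*s) • rotE w) := by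
      have h2ξ : (2:ℝ) * ξ - t = 1/t := by rw [hξ]; field_simp; ring
      have harr : Y - z₂ = (1/t) • w + (2*s) • rotE w := by
        rw [hz₂, hY, ← h2ξ]; module
      rw [← U_sub U hUadd, harr, hUadd]; rfl
    calc bil (Vf U w t) (Vf U w (1/t) + U ((2*s) • rotE w))
        = bil (U Y + U z₂) (U Y - U z₂) := by rw [hsumU, hdiffU]
      _ = q2 (U Y) - q2 (U z₂) := bil_add_sub _ _
      _ = 1 := by rw [hnY, hnz₂]; push_cast; ring
  have h1 := hkey y hysq
  have h2 := hkey (-y) (by rw [neg_pow]; simpa using hysq)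
  have hneg : U ((2*(-y)) • rotE w) = - U ((2*y) • rotE w) := by
    have harr : (2*(-y)) • rotE w = (0:ℝ×ℝ) - ((2*y) • rotE w) := by module
    rw [harr, U_sub U hUadd]
    rw [U_zero U hUadd]; abel
  rw [hneg] at h2
  have hsum : bil (Vf U w t) (Vf U w (1/t) + U ((2*y) • rotE w))
      + bil (Vf U w t) (Vf U w (1/t) + -U ((2*y) • rotE w)) = 1 + 1 := by rw [h1, h2]
  rw [← bil_add_right] at hsum
  have hcomb : Vf U w (1/t) + U ((2*y) • rotE w) + (Vf U w (1/t) + -U ((2*y) • rotE w))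
      = (2:F) • (Vf U w (1/t)) := by rw [two_smul]; abel
  rw [hcomb, bil_smul_right] at hsum
  linear_combination hsum / 2

/-- IPT : inverse pairs are parallel -/
lemma IPT (hUadd : ∀ y z : ℝ × ℝ, U (y + z) = U y + U z)
    (hUq : ∀ (z : ℝ × ℝ) (ρ : ℚ), (ρ : ℝ) = nE z → q2 (U z) = (ρ : F))
    (hw : nE w = 1) {t : ℝ} (ht : t ≠ 0) : cr (Vf U w t) (Vf U w (1/t)) = 0 := by
  classical
  set ξ := (t + 1/t)/2 with hξ
  obtain ⟨Q₁, hQ₁⟩ := exists_rat_gt (ξ^2 + 1)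
  have hQ₂ : ξ^2 + 1 < ((Q₁ + 1 : ℚ):ℝ) := by push_cast; linarith [hQ₁]
  obtain ⟨Y₁, hY₁n, hY₁t, hY₁t'⟩ := web_data U w hUadd hUq hw ht Q₁ hQ₁
  obtain ⟨Y₂, hY₂n, hY₂t, hY₂t'⟩ := web_data U w hUadd hUq hw ht (Q₁+1) hQ₂
  set w' := U Y₁ - U Y₂ with hw'
  have hb : ∀ x : F × F, q2 (U Y₁ - x) = ((Q₁ - 1:ℚ):F) →
      q2 (U Y₂ - x) = ((Q₁ + 1 - 1:ℚ):F) → bil w' x = 0 := by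
    intro x h1 h2
    have e1 : q2 (U Y₁ - x) = q2 (U Y₁) + q2 x - 2 * bil (U Y₁) x := q2_sub _ _
    have e2 : q2 (U Y₂ - x) = q2 (U Y₂) + q2 x - 2 * bil (U Y₂) x := q2_sub _ _
    rw [h1, hY₁n] at e1
    rw [h2, hY₂n] at e2
    rw [hw', bil_sub_left]
    push_cast at e1 e2 ⊢
    linear_combination (e1 - e2) / 2
  have hbt : bil w' (Vf U w t) = 0 := hb _ hY₁t hY₂t
  have hbt' : bil w' (Vf U w (1/t)) = 0 := hb _ hY₁t' hY₂t'
  have hw'ne : w' ≠ 0 := by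
    intro h0
    have hUY : U Y₁ = U Y₂ := by rwa [hw', sub_eq_zero] at h0
    rw [hUY, hY₂n] at hY₁n
    have hcast : ((Q₁ + 1 : ℚ):F) = ((Q₁ : ℚ):F) := hY₁n
    have : (Q₁ + 1 : ℚ) = Q₁ := by exact_mod_cast hcast
    linarith [this]
  by_cases hq2 : q2 w' = 0
  · obtain ⟨c₁, hc₁⟩ := par_of_iso w' (Vf U w t) hq2 hw'ne hbt
    obtain ⟨c₂, hc₂⟩ := par_of_iso w' (Vf U w (1/t)) hq2 hw'ne hbt'
    rw [hc₁, hc₂, cr_smul_left, cr_smul_right, cr_self]; ring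
  · exact cr_eq_zero_mediator _ _ w' (bil_comm w' _ ▸ hbt) (bil_comm w' _ ▸ hbt') hq2

/-- INV : inversion formula -/
lemma INV (hUadd : ∀ y z : ℝ × ℝ, U (y + z) = U y + U z)
    (hUq : ∀ (z : ℝ × ℝ) (ρ : ℚ), (ρ : ℝ) = nE z → q2 (U z) = (ρ : F))
    (hw : nE w = 1) {t : ℝ} (ht : t ≠ 0) :
    q2 (Vf U w t) ≠ 0 ∧ Vf U w (1/t) = (q2 (Vf U w t))⁻¹ • Vf U w t := by
  have hfr := FR U w hUadd hUq hw ht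
  have hipt := IPT U w hUadd hUq hw ht
  have hVt : Vf U w t ≠ 0 := by
    intro h0
    rw [h0] at hfr
    simp [bil] at hfr
  obtain ⟨c, hc⟩ := par_of_cr _ _ hVt hipt
  have hc1 : c * q2 (Vf U w t) = 1 := by
    rw [hc, bil_smul_right, bil_self] at hfr; exact hfr
  have hq2ne : q2 (Vf U w t) ≠ 0 := by
    intro h0; rw [h0, mul_zero] at hc1; exact one_ne_zero hc1.symm
  refine ⟨hq2ne, ?_⟩
  rw [hc, eq_inv_of_mul_eq_one_left hc1]

/-- STEPW : composite half-inversion -/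
lemma STEPW (hUadd : ∀ y z : ℝ × ℝ, U (y + z) = U y + U z)
    (hUq : ∀ (z : ℝ × ℝ) (ρ : ℚ), (ρ : ℝ) = nE z → q2 (U z) = (ρ : F))
    (hw : nE w = 1) {t : ℝ} (ht : t ≠ 0) (c : ℚ) (hc : 0 < c) :
    q2 (Vf U w t) + (c:F) ≠ 0 ∧
      Vf U w (t/(t^2 + (c:ℝ))) = (q2 (Vf U w t) + (c:F))⁻¹ • Vf U w t := by
  obtain ⟨hΦne, hVinv⟩ := INV U w hUadd hUq hw ht
  set Φ := q2 (Vf U w t) with hΦ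
  have hden : (0:ℝ) < t^2 + (c:ℝ) := by positivity
  have hdenne : t^2 + (c:ℝ) ≠ 0 := ne_of_gt hden
  set w₀ := (t^2 + (c:ℝ))/t with hw₀
  have hw₀ne : w₀ ≠ 0 := by
    rw [hw₀]
    exact div_ne_zero hdenne ht
  have hVw₀ : Vf U w w₀ = (1 + (c:F) * Φ⁻¹) • Vf U w t := by
    have hreal : w₀ = t + (c:ℝ) * (1/t) := by rw [hw₀]; field_simp
    rw [hreal, V_add U w hUadd, V_rat U w hUadd, hVinv]
    rw [smul_smul, add_smul, one_smul]
  have hq2w₀ : q2 (Vf U w w₀) = (1 + (c:F) * Φ⁻¹)^2 * Φ := by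
    rw [hVw₀, q2_smul]
  obtain ⟨hΦw₀ne, hVinvw₀⟩ := INV U w hUadd hUq hw hw₀ne
  have hαne : (1 + (c:F) * Φ⁻¹) ≠ 0 := by
    intro h0
    rw [hq2w₀, h0] at hΦw₀ne
    simp at hΦw₀ne
  have hsc : Φ + (c:F) = (1 + (c:F) * Φ⁻¹) * Φ := by field_simp
  have hΦcne : Φ + (c:F) ≠ 0 := by
    rw [hsc]; exact mul_ne_zero hαne hΦne
  refine ⟨hΦcne, ?_⟩
  have hone : 1/w₀ = t/(t^2 + (c:ℝ)) := by rw [hw₀]; field_simp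
  rw [← hone, hVinvw₀, hq2w₀, hVw₀, smul_smul]
  congr 1
  rw [hsc]
  field_simp

/-- CUBE : `V(t³) = Φ(t) • V(t)` -/
lemma CUBE (hUadd : ∀ y z : ℝ × ℝ, U (y + z) = U y + U z)
    (hUq : ∀ (z : ℝ × ℝ) (ρ : ℚ), (ρ : ℝ) = nE z → q2 (U z) = (ρ : F))
    (hw : nE w = 1) {t : ℝ} (ht : t ≠ 0) :
    Vf U w (t^3) = q2 (Vf U w t) • Vf U w t := by
  obtain ⟨hΦne, hVinv⟩ := INV U w hUadd hUq hw ht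
  set Φ := q2 (Vf U w t) with hΦ
  obtain ⟨hAne, hVA⟩ := STEPW U w hUadd hUq hw ht 1 one_pos
  obtain ⟨hBne, hVB⟩ := STEPW U w hUadd hUq hw ht 2 two_pos
  push_cast at hAne hVA hBne hVB
  set A := Φ + 1 with hA
  set B := Φ + 2 with hB
  have hd1 : t^2 + (1:ℝ) ≠ 0 := by positivity
  have hd2 : t^2 + (2:ℝ) ≠ 0 := by positivity
  set ζ := t/((t^2+1)*(t^2+2)) with hζ
  have hζne : ζ ≠ 0 := by
    rw [hζ]
    exact div_ne_zero ht (mul_ne_zero hd1 hd2)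
  have hζreal : ζ = t/(t^2+1) - t/(t^2+2) := by rw [hζ]; field_simp; ring
  have hVζ : Vf U w ζ = (A⁻¹ * B⁻¹) • Vf U w t := by
    rw [hζreal, V_sub U w hUadd, hVA, hVB, ← sub_smul]
    congr 1
    field_simp
    rw [hA, hB]; ring
  have hq2ζ : q2 (Vf U w ζ) = (A⁻¹*B⁻¹)^2 * Φ := by rw [hVζ, q2_smul]
  obtain ⟨hΦζne, hVinvζ⟩ := INV U w hUadd hUq hw hζne
  have hinvζreal : 1/ζ = t^3 + (3*t + 2*(1/t)) := by
    rw [hζ]; field_simp; ring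
  have hVinvζ2 : Vf U w (1/ζ) = Vf U w (t^3) + ((3:F) • Vf U w t + (2:F) • Vf U w (1/t)) := by
    rw [hinvζreal, V_add U w hUadd, V_add U w hUadd]
    congr 2
    · have h3 : (3:ℝ) * t = ((3:ℚ):ℝ) * t := by norm_num
      rw [h3, V_rat U w hUadd, Rat.cast_ofNat]
    · have h2 : (2:ℝ) * (1/t) = ((2:ℚ):ℝ) * (1/t) := by norm_num
      rw [h2, V_rat U w hUadd, Rat.cast_ofNat]
  have hmain : Vf U w (t^3) + ((3:F) • Vf U w t + (2:F) • Vf U w (1/t))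
      = ((A⁻¹*B⁻¹)^2 * Φ)⁻¹ • ((A⁻¹ * B⁻¹) • Vf U w t) := by
    rw [← hVζ, ← hq2ζ, ← hVinvζ, ← hVinvζ2]
  rw [hVinv] at hmain
  rw [smul_smul, smul_smul] at hmain
  have hmain2 : Vf U w (t^3)
      = (((A⁻¹*B⁻¹)^2 * Φ)⁻¹ * (A⁻¹ * B⁻¹)) • Vf U w t
        - ((3:F) • Vf U w t + ((2:F) * Φ⁻¹) • Vf U w t) :=
    eq_sub_of_add_eq hmain
  rw [hmain2]
  have hsc : (((A⁻¹*B⁻¹)^2 * Φ)⁻¹ * (A⁻¹ * B⁻¹)) = Φ + 3 + 2*Φ⁻¹ := by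
    rw [show ((A⁻¹*B⁻¹)^2 * Φ)⁻¹ * (A⁻¹ * B⁻¹) = A * B * Φ⁻¹ by field_simp]
    rw [hA, hB]
    field_simp
    ring
  rw [hsc, add_smul, add_smul]
  abel

/-- MAIN : the whole fiber lies on the line through `V 1` -/
lemma MAIN (hUadd : ∀ y z : ℝ × ℝ, U (y + z) = U y + U z)
    (hUq : ∀ (z : ℝ × ℝ) (ρ : ℚ), (ρ : ℝ) = nE z → q2 (U z) = (ρ : F))
    (hw : nE w = 1) (s : ℝ) : ∃ σ : F, Vf U w s = σ • Vf U w 1 := by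
  by_cases hrat : ∃ ρ : ℚ, (ρ:ℝ) = s
  · obtain ⟨ρ, hρ⟩ := hrat
    refine ⟨(ρ:F), ?_⟩
    rw [show s = (ρ:ℝ) * 1 by rw [mul_one, hρ]]
    exact V_rat U w hUadd ρ 1
  · push_neg at hrat
    have hs0 : s ≠ 0 := fun h => hrat 0 (by rw [h]; norm_num)
    have hs1 : s + 1 ≠ 0 := by
      intro h
      exact hrat (-1) (by push_cast; linarith [h])
    have hs2 : s + 2 ≠ 0 := by
      intro h
      exact hrat (-2) (by push_cast; linarith [h])
    set X := Vf U w s with hX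
    set u := Vf U w 1 with hu
    set Y := Vf U w (s^2) with hY
    set Φ := q2 X with hΦ
    set σ := bil X u with hσ
    have hqu : q2 u = 1 := by
      have := V_q2 U w hUq hw 1 1 (by norm_num)
      rw [← hu] at this
      simpa using this
    have cube_s : Vf U w (s^3) = Φ • X := CUBE U w hUadd hUq hw hs0
    have hVs1 : Vf U w (s+1) = X + u := V_add U w hUadd s 1
    have hq1 : q2 (Vf U w (s+1)) = Φ + 2*σ + 1 := by
      rw [hVs1, q2_add, hqu, ← hσ, ← hΦ]; ring
    have hexp1 : Vf U w ((s+1)^3) = Φ • X + ((3:F) • Y + ((3:F) • X + u)) := by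
      rw [show ((s+1):ℝ)^3 = s^3 + ((3:ℝ)*s^2 + ((3:ℝ)*s + 1)) by ring]
      rw [V_add U w hUadd, V_add U w hUadd, V_add U w hUadd]
      rw [cube_s]
      congr 2
      · have h3 : (3:ℝ) * s^2 = ((3:ℕ):ℝ) * s^2 := by norm_num
        rw [h3, V_natmul U w hUadd]; norm_num; exact hY.symm
      · congr 1
        have h3 : (3:ℝ) * s = ((3:ℕ):ℝ) * s := by norm_num
        rw [h3, V_natmul U w hUadd]; norm_num; exact hX.symm
    have E1 : Φ • X + ((3:F) • Y + ((3:F) • X + u)) = (Φ + 2*σ + 1) • (X + u) := by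
      rw [← hexp1, CUBE U w hUadd hUq hw hs1, hq1, hVs1]
    have hV2 : Vf U w (2:ℝ) = (2:F) • u := by
      have h2 : (2:ℝ) = ((2:ℕ):ℝ) * 1 := by norm_num
      rw [h2, V_natmul U w hUadd]; norm_num; exact hu.symm
    have hVs2 : Vf U w (s+2) = X + (2:F) • u := by
      rw [V_add U w hUadd, hV2]
    have hq2' : q2 (Vf U w (s+2)) = Φ + 4*σ + 4 := by
      rw [hVs2, q2_add, q2_smul, bil_smul_right, hqu, ← hσ, ← hΦ]; ring
    have hexp2 : Vf U w ((s+2)^3) = Φ • X + ((6:F) • Y + ((12:F) • X + (8:F) • u)) := by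
      rw [show ((s+2):ℝ)^3 = s^3 + ((6:ℝ)*s^2 + ((12:ℝ)*s + 8)) by ring]
      rw [V_add U w hUadd, V_add U w hUadd, V_add U w hUadd]
      rw [cube_s]
      congr 2
      · have h6 : (6:ℝ) * s^2 = ((6:ℕ):ℝ) * s^2 := by norm_num
        rw [h6, V_natmul U w hUadd]; norm_num; exact hY.symm
      · congr 1
        · have h12 : (12:ℝ) * s = ((12:ℕ):ℝ) * s := by norm_num
          rw [h12, V_natmul U w hUadd]; norm_num; exact hX.symm
        · have h8 : (8:ℝ) = ((8:ℕ):ℝ) * 1 := by norm_num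
          rw [h8, V_natmul U w hUadd]; norm_num; exact hu.symm
    have E2 : Φ • X + ((6:F) • Y + ((12:F) • X + (8:F) • u))
        = (Φ + 4*σ + 4) • (X + (2:F) • u) := by
      rw [← hexp2, CUBE U w hUadd hUq hw hs2, hq2', hVs2]
    refine ⟨σ, ?_⟩
    have e1a := congrArg Prod.fst E1
    have e1b := congrArg Prod.snd E1
    have e2a := congrArg Prod.fst E2
    have e2b := congrArg Prod.snd E2
    simp only [Prod.fst_add, Prod.snd_add, Prod.smul_fst, Prod.smul_snd,
      smul_eq_mul] at e1a e1b e2a e2b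
    have hgoal1 : X.1 = σ * u.1 := by linear_combination (e2a - 2*e1a)/4
    have hgoal2 : X.2 = σ * u.2 := by linear_combination (e2b - 2*e1b)/4
    exact Prod.ext (by rw [Prod.smul_fst, smul_eq_mul]; exact hgoal1)
      (by rw [Prod.smul_snd, smul_eq_mul]; exact hgoal2)

end Fiber

/- ### translating the hypothesis -/

section Hyp
variable [Algebra ℝ F]

lemma hq_of_hf (f : ℝ × ℝ → F × F)
    (hf : ∀ d : ℝ, 0 < d → (∃ q : ℚ, (q : ℝ) = d ^ 2) →
      ∀ x y : ℝ × ℝ, Real.sqrt ((x.1 - y.1) ^ 2 + (x.2 - y.2) ^ 2) = d →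
        ((f x).1 - (f y).1) ^ 2 + ((f x).2 - (f y).2) ^ 2 = algebraMap ℝ F (d ^ 2)) :
    ∀ x y : ℝ × ℝ, ∀ ρ : ℚ, (ρ : ℝ) = nE (x - y) → q2 (f x - f y) = (ρ : F) := by
  intro x y ρ hρ
  by_cases hxy : x = y
  · subst hxy
    have h0 : nE (x - x) = 0 := by simp [nE]
    rw [h0] at hρ
    have : ρ = 0 := by exact_mod_cast hρ
    rw [this]
    simp [q2]
  · have hz : x - y ≠ 0 := sub_ne_zero.mpr hxy
    have hn : 0 < nE (x - y) := nE_pos _ hz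
    set d := Real.sqrt (nE (x - y)) with hd
    have hdpos : 0 < d := Real.sqrt_pos.mpr hn
    have hd2 : d^2 = nE (x - y) := Real.sq_sqrt (le_of_lt hn)
    have hdist : Real.sqrt ((x.1 - y.1) ^ 2 + (x.2 - y.2) ^ 2) = d := by
      rw [hd, show (x.1 - y.1) ^ 2 + (x.2 - y.2) ^ 2 = nE (x - y) by simp [nE]]
    have := hf d hdpos ⟨ρ, by rw [hd2]; exact hρ⟩ x y hdist
    have hq2 : q2 (f x - f y) = algebraMap ℝ F (d^2) := by
      rw [← this]
      simp [q2, Prod.fst_sub, Prod.snd_sub]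
    rw [hq2, hd2, ← hρ]
    exact map_ratCast (algebraMap ℝ F) ρ

end Hyp
end Stmt12

open Stmt12 in
/-- `f : ℝ² → 𝔽²` preserves every distance `d > 0` with `d²` rational
(`|x-y| = d` implies `φ (f x) (f y) = d²`). -/
theorem stmt_12 {F : Type*} [Field F] [Algebra ℝ F]
    (f : ℝ × ℝ → F × F)
    (hf : ∀ d : ℝ, 0 < d → (∃ q : ℚ, (q : ℝ) = d ^ 2) →
      ∀ x y : ℝ × ℝ, Real.sqrt ((x.1 - y.1) ^ 2 + (x.2 - y.2) ^ 2) = d →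
        ((f x).1 - (f y).1) ^ 2 + ((f x).2 - (f y).2) ^ 2 = algebraMap ℝ F (d ^ 2))
    (A B C D : ℝ × ℝ) (h : ¬ LinearIndependent ℝ ![B - A, D - C]) :
    ¬ LinearIndependent F ![f B - f A, f D - f C] := by
  haveI hchar : CharZero F := charZero_of_injective_algebraMap (algebraMap ℝ F).injective
  have hq := hq_of_hf f hf
  set U : ℝ × ℝ → F × F := Umap f with hU
  have hUadd : ∀ y z : ℝ × ℝ, U (y + z) = U y + U z := by
    intro y z
    have h1 : f (y + z) = f y + Umap f z := U_transl f hq y z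
    rw [hU]
    show f (y+z) - f 0 = (f y - f 0) + (f z - f 0)
    rw [h1]
    show f y + (f z - f 0) - f 0 = (f y - f 0) + (f z - f 0)
    abel
  have hUq : ∀ (z : ℝ × ℝ) (ρ : ℚ), (ρ : ℝ) = nE z → q2 (U z) = (ρ : F) := by
    intro z ρ hρ
    rw [hU]
    show q2 (f z - f 0) = (ρ:F)
    apply hq
    rw [sub_zero]; exact hρ
  have hdep : D - C = 0 ∨ ∃ a : ℝ, a • (D - C) = B - A := by
    by_contra hcon
    push_neg at hcon
    obtain ⟨h1, h2⟩ := hcon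
    apply h
    rw [linearIndependent_fin2]
    constructor
    · simpa using h1
    · intro a
      simpa using (h2 a)
  rcases hdep with hDC | ⟨a, ha⟩
  · have hzero : f D - f C = 0 := by
      rw [show D = C from sub_eq_zero.mp hDC]; abel
    intro hLI
    rw [linearIndependent_fin2] at hLI
    apply hLI.1
    simpa using hzero
  · have hBAU : f B - f A = U (B - A) := by
      have := U_transl f hq A (B - A)
      rw [show A + (B - A) = B by abel] at this
      rw [this, hU]; abel
    have hDCU : f D - f C = U (D - C) := by
      have := U_transl f hq C (D - C)
      rw [show C + (D - C) = D by abel] at this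
      rw [this, hU]; abel
    by_cases hDC : D - C = 0
    · have hzero : f D - f C = 0 := by
        rw [show D = C from sub_eq_zero.mp hDC]; abel
      intro hLI
      rw [linearIndependent_fin2] at hLI
      apply hLI.1
      simpa using hzero
    · set L := Real.sqrt (nE (D - C)) with hL
      have hnpos : 0 < nE (D - C) := nE_pos _ hDC
      have hLpos : 0 < L := Real.sqrt_pos.mpr hnpos
      have hLne : L ≠ 0 := ne_of_gt hLpos
      have hL2 : L^2 = nE (D - C) := Real.sq_sqrt (le_of_lt hnpos)
      set wv : ℝ × ℝ := L⁻¹ • (D - C) with hwv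
      have hw : nE wv = 1 := by
        rw [hwv, nE_smul, ← hL2]
        field_simp
      have hDCw : D - C = L • wv := by
        rw [hwv, smul_smul]
        rw [mul_inv_cancel₀ hLne, one_smul]
      have hBAw : B - A = (a * L) • wv := by
        rw [← ha, hDCw, smul_smul]
      obtain ⟨σ₁, hσ₁⟩ := MAIN U wv hUadd hUq hw (a * L)
      obtain ⟨σ₂, hσ₂⟩ := MAIN U wv hUadd hUq hw L
      have hfBA : f B - f A = σ₁ • Vf U wv 1 := by
        rw [hBAU, hBAw]
        exact hσ₁
      have hfDC : f D - f C = σ₂ • Vf U wv 1 := by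
        rw [hDCU, hDCw]
        exact hσ₂
      intro hLI
      rw [linearIndependent_fin2] at hLI
      obtain ⟨hne, hall⟩ := hLI
      have hne' : σ₂ • Vf U wv 1 ≠ 0 := by
        intro h0
        apply hne
        simpa [hfDC] using h0
      have hσ₂ne : σ₂ ≠ 0 := by
        intro h0
        apply hne'
        rw [h0, zero_smul]
      apply hall (σ₁ / σ₂)
      have hcombine : (σ₁ / σ₂) • (σ₂ • Vf U wv 1) = σ₁ • Vf U wv 1 := by
        rw [smul_smul, div_mul_cancel₀ _ hσ₂ne]
      simp only [Matrix.cons_val_one, Matrix.head_cons, Matrix.cons_val_zero]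
      rw [hfDC, hfBA]
      exact hcombine
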